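/- Marko's inequality for two processes: min(H_X^T, H_Y^T) ≥ T_{X→Y}^T + T_{Y→X}^T, i.e., the sum of the two directed transfer entropies is bounded above by each of the entropy rates H_X^T = Σ_{t=1}^T H(X^t|X̄^{t-1}) and H_Y^T = Σ_{t=1}^T H(Y^t|Ȳ^{t-1}). -/

import Mathlib

open scoped BigOperators

noncomputable section

variable {Ω : Type*} [Fintype Ω] [DecidableEq Ω]

/-- Probability of the event `X = s` under the mass function `p`. -/
def prob (p : Ω → ℝ) {S : Type*} [DecidableEq S] (X : Ω → S) (s : S) : ℝ :=
  ∑ ω, if X ω = s then p ω else 0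

/-- Shannon entropy of a finite-valued random variable. -/
def entropy (p : Ω → ℝ) {S : Type*} [Fintype S] [DecidableEq S] (X : Ω → S) : ℝ :=
  -∑ s, prob p X s * Real.log (prob p X s)

/-- Conditional Shannon entropy `H(X | Y)`. -/
def condEntropy (p : Ω → ℝ) {S T' : Type*} [Fintype S] [DecidableEq S] [Fintype T']
    [DecidableEq T'] (X : Ω → S) (Y : Ω → T') : ℝ :=
  entropy p (fun ω => (X ω, Y ω)) - entropy p Y

/-- Mutual information `I(X; Y)`. -/
def mutualInfo (p : Ω → ℝ) {S T' : Type*} [Fintype S] [DecidableEq S] [Fintype T']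
    [DecidableEq T'] (X : Ω → S) (Y : Ω → T') : ℝ :=
  entropy p X - condEntropy p X Y

/-- Conditional mutual information `I(X; Y | Z)`. -/
def condMutualInfo (p : Ω → ℝ) {S T' U : Type*} [Fintype S] [DecidableEq S] [Fintype T']
    [DecidableEq T'] [Fintype U] [DecidableEq U] (X : Ω → S) (Y : Ω → T') (Z : Ω → U) : ℝ :=
  condEntropy p X Z - condEntropy p X (fun ω => (Y ω, Z ω))

/-- The past trajectory `X̄^{t-1} = (X^0, …, X^{t-1})` (0-indexed). -/
def past {S : Type*} (X : ℕ → Ω → S) (t : ℕ) (ω : Ω) : Fin t → S :=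
  fun k => X k ω

/-- `p` is a probability mass function. -/
def IsProb (p : Ω → ℝ) : Prop := (∀ ω, 0 ≤ p ω) ∧ ∑ ω, p ω = 1

/-- Conditional independence of `X` and `Y` given `Z` (for finite-valued random variables). -/
def CondIndep (p : Ω → ℝ) {S T' U : Type*} [DecidableEq S] [DecidableEq T'] [DecidableEq U]
    (X : Ω → S) (Y : Ω → T') (Z : Ω → U) : Prop :=
  ∀ s t u, prob p (fun ω => (X ω, Y ω, Z ω)) (s, t, u) * prob p Z u =
    prob p (fun ω => (X ω, Z ω)) (s, u) * prob p (fun ω => (Y ω, Z ω)) (t, u)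

/-- Pairwise transfer entropy `T_{Y→X}^T = Σ_t I(X^t; Ȳ^{t-1} | X̄^{t-1})` (from `Y` to `X`). -/
def pte (p : Ω → ℝ) {S T' : Type*} [Fintype S] [DecidableEq S] [Fintype T'] [DecidableEq T']
    (Y : ℕ → Ω → T') (X : ℕ → Ω → S) (T : ℕ) : ℝ :=
  ∑ t ∈ Finset.range T, condMutualInfo p (X t) (past Y t) (past X t)

/-- Entropy rate `H_X^T = Σ_t H(X^t | X̄^{t-1})`. -/
def entropyRate (p : Ω → ℝ) {S : Type*} [Fintype S] [DecidableEq S] (X : ℕ → Ω → S)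
    (T : ℕ) : ℝ :=
  ∑ t ∈ Finset.range T, condEntropy p (X t) (past X t)

/-- Free entropy `F_X^T = Σ_t H(X^t | X̄^{t-1}, Ȳ^{t-1})`. -/
def freeEntropy (p : Ω → ℝ) {S T' : Type*} [Fintype S] [DecidableEq S] [Fintype T']
    [DecidableEq T'] (X : ℕ → Ω → S) (Y : ℕ → Ω → T') (T : ℕ) : ℝ :=
  ∑ t ∈ Finset.range T, condEntropy p (X t) (fun ω => (past X t ω, past Y t ω))

/-- Residual entropy `R_{X,Y}^T = Σ_t I(X^t; Y^t | X̄^{t-1}, Ȳ^{t-1})`. -/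
def residualEntropy (p : Ω → ℝ) {S T' : Type*} [Fintype S] [DecidableEq S] [Fintype T']
    [DecidableEq T'] (X : ℕ → Ω → S) (Y : ℕ → Ω → T') (T : ℕ) : ℝ :=
  ∑ t ∈ Finset.range T, condMutualInfo p (X t) (Y t) (fun ω => (past X t ω, past Y t ω))

set_option linter.unusedSectionVars false

lemma prob_nonneg (p : Ω → ℝ) (hp : ∀ ω, 0 ≤ p ω) {S : Type*} [DecidableEq S]
    (X : Ω → S) (s : S) : 0 ≤ prob p X s :=
  Finset.sum_nonneg fun ω _ => by by_cases h : X ω = s <;> simp [h, hp ω]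

lemma marg_right (p : Ω → ℝ) {S T' : Type*} [Fintype S] [DecidableEq S] [DecidableEq T']
    (X : Ω → S) (Y : Ω → T') (t : T') :
    prob p Y t = ∑ s, prob p (fun ω => (X ω, Y ω)) (s, t) := by
  unfold prob
  rw [Finset.sum_comm]
  refine Finset.sum_congr rfl fun ω _ => ?_
  by_cases h : Y ω = t <;> simp [Prod.ext_iff, h]

lemma marg_mid (p : Ω → ℝ) {S T U : Type*} [DecidableEq S] [Fintype T] [DecidableEq T]
    [DecidableEq U] (X : Ω → S) (Y : Ω → T) (Z : Ω → U) (s : S) (u : U) :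
    prob p (fun ω => (X ω, Z ω)) (s, u)
      = ∑ t, prob p (fun ω => (X ω, (Y ω, Z ω))) (s, (t, u)) := by
  unfold prob
  rw [Finset.sum_comm]
  refine Finset.sum_congr rfl fun ω _ => ?_
  by_cases h1 : X ω = s <;> by_cases h2 : Z ω = u <;> simp [Prod.ext_iff, h1, h2]

lemma entropy_comp (p : Ω → ℝ) {A B : Type*} [Fintype A] [DecidableEq A] [Fintype B]
    [DecidableEq B] {f : A → B} (hf : Function.Injective f) (X : Ω → A) :
    entropy p (fun ω => f (X ω)) = entropy p X := by
  unfold entropy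
  congr 1
  rw [← Finset.sum_subset (Finset.subset_univ (Finset.univ.image f))]
  · rw [Finset.sum_image (fun a _ b _ h => hf h)]
    refine Finset.sum_congr rfl fun s _ => ?_
    have h : prob p (fun ω => f (X ω)) (f s) = prob p X s := by
      unfold prob
      exact Finset.sum_congr rfl fun ω _ => by simp [hf.eq_iff]
    rw [h]
  · intro y _ hy
    have h : prob p (fun ω => f (X ω)) y = 0 := by
      refine Finset.sum_eq_zero fun ω _ => ?_
      have : f (X ω) ≠ y := fun h => hy (Finset.mem_image.2 ⟨X ω, Finset.mem_univ _, h⟩)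
      simp [this]
    simp [h]

lemma entropy_unique (p : Ω → ℝ) (hp1 : ∑ ω, p ω = 1) {S : Type*} [Fintype S]
    [DecidableEq S] [Unique S] (X : Ω → S) : entropy p X = 0 := by
  unfold entropy
  rw [Fintype.sum_unique]
  have h : prob p X default = 1 := by
    unfold prob
    rw [← hp1]
    exact Finset.sum_congr rfl fun ω _ => by simp [Unique.eq_default (X ω)]
  simp [h]

lemma mul_log_mono {a b : ℝ} (ha : 0 ≤ a) (hab : a ≤ b) :
    a * Real.log a ≤ a * Real.log b := by
  rcases eq_or_lt_of_le ha with h | h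
  · simp [← h]
  · exact mul_le_mul_of_nonneg_left (Real.log_le_log h hab) ha
    -- maybe name is Real.log_le_log_of_le or needs (0 < a)

lemma condEntropy_nonneg (p : Ω → ℝ) (hp : ∀ ω, 0 ≤ p ω) {S T' : Type*} [Fintype S]
    [DecidableEq S] [Fintype T'] [DecidableEq T'] (X : Ω → S) (Y : Ω → T') :
    0 ≤ condEntropy p X Y := by
  unfold condEntropy entropy
  rw [sub_nonneg, neg_le_neg_iff]
  calc ∑ st : S × T', prob p (fun ω => (X ω, Y ω)) st * Real.log (prob p (fun ω => (X ω, Y ω)) st)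
      = ∑ s, ∑ t, prob p (fun ω => (X ω, Y ω)) (s, t)
          * Real.log (prob p (fun ω => (X ω, Y ω)) (s, t)) := Fintype.sum_prod_type _
    _ ≤ ∑ s, ∑ t, prob p (fun ω => (X ω, Y ω)) (s, t) * Real.log (prob p Y t) := by
        refine Finset.sum_le_sum fun s _ => Finset.sum_le_sum fun t _ => ?_
        refine mul_log_mono (prob_nonneg p hp _ _) ?_
        rw [marg_right p X Y t]
        exact Finset.single_le_sum (f := fun s' => prob p (fun ω => (X ω, Y ω)) (s', t)) (fun s' _ => prob_nonneg p hp _ _) (Finset.mem_univ s)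
    _ = ∑ t, ∑ s, prob p (fun ω => (X ω, Y ω)) (s, t) * Real.log (prob p Y t) :=
        Finset.sum_comm
    _ = ∑ t, prob p Y t * Real.log (prob p Y t) := by
        refine Finset.sum_congr rfl fun t _ => ?_
        rw [← Finset.sum_mul, ← marg_right p X Y t]

lemma gibbs_term {a b c d : ℝ} (ha : 0 ≤ a) (hb : a ≤ b) (hc : a ≤ c) (hd : a ≤ d) :
    a * (Real.log b + Real.log c - Real.log a - Real.log d) ≤ b * c / d - a := by
  rcases eq_or_lt_of_le ha with h | h
  · rw [← h]
    have h0 : (0:ℝ) ≤ b * c / d := by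
      have : (0:ℝ) ≤ b := le_trans ha hb
      have : (0:ℝ) ≤ c := le_trans ha hc
      have : (0:ℝ) ≤ d := le_trans ha hd
      positivity
    simpa using h0
  · have hb' : 0 < b := lt_of_lt_of_le h hb
    have hc' : 0 < c := lt_of_lt_of_le h hc
    have hd' : 0 < d := lt_of_lt_of_le h hd
    have h1 : Real.log b + Real.log c - Real.log a - Real.log d
        = Real.log (b * c / (a * d)) := by
      rw [Real.log_div (by positivity) (by positivity),
        Real.log_mul (ne_of_gt hb') (ne_of_gt hc'),
        Real.log_mul (ne_of_gt h) (ne_of_gt hd')]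
      ring
    rw [h1]
    have h2 : Real.log (b * c / (a * d)) ≤ b * c / (a * d) - 1 :=
      Real.log_le_sub_one_of_pos (by positivity)
    calc a * Real.log (b * c / (a * d)) ≤ a * (b * c / (a * d) - 1) :=
          mul_le_mul_of_nonneg_left h2 ha
      _ = b * c / d - a := by field_simp

lemma condMutualInfo_nonneg (p : Ω → ℝ) (hp : ∀ ω, 0 ≤ p ω) {S T' U : Type*} [Fintype S]
    [DecidableEq S] [Fintype T'] [DecidableEq T'] [Fintype U] [DecidableEq U]
    (X : Ω → S) (Y : Ω → T') (Z : Ω → U) : 0 ≤ condMutualInfo p X Y Z := by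
  classical
  set a : S → T' → U → ℝ := fun s t u => prob p (fun ω => (X ω, (Y ω, Z ω))) (s, (t, u)) with ha_def
  set b : S → U → ℝ := fun s u => prob p (fun ω => (X ω, Z ω)) (s, u) with hb_def
  set c : T' → U → ℝ := fun t u => prob p (fun ω => (Y ω, Z ω)) (t, u) with hc_def
  set d : U → ℝ := fun u => prob p Z u with hd_def
  have ha0 : ∀ s t u, 0 ≤ a s t u := fun s t u => prob_nonneg p hp _ _
  have hba : ∀ s u, b s u = ∑ t, a s t u := fun s u => marg_mid p X Y Z s u
  have hca : ∀ t u, c t u = ∑ s, a s t u := fun t u => marg_right p X (fun ω => (Y ω, Z ω)) (t, u)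
  have hdc : ∀ u, d u = ∑ t, c t u := fun u => marg_right p Y Z u
  have hdb : ∀ u, d u = ∑ s, b s u := by
    intro u
    rw [hdc u]
    simp only [hca, hba]
    exact Finset.sum_comm
  have hb0 : ∀ s u, 0 ≤ b s u := fun s u => prob_nonneg p hp _ _
  have hc0 : ∀ t u, 0 ≤ c t u := fun t u => prob_nonneg p hp _ _
  have hab : ∀ s t u, a s t u ≤ b s u := fun s t u => by
    rw [hba]; exact Finset.single_le_sum (fun t' _ => ha0 s t' u) (Finset.mem_univ t)
  have hac : ∀ s t u, a s t u ≤ c t u := fun s t u => by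
    rw [hca]; exact Finset.single_le_sum (fun s' _ => ha0 s' t u) (Finset.mem_univ s)
  have had : ∀ s t u, a s t u ≤ d u := fun s t u =>
    le_trans (hab s t u)
      (by rw [hdb]; exact Finset.single_le_sum (fun s' _ => hb0 s' u) (Finset.mem_univ s))
  have eA : entropy p (fun ω => (X ω, (Y ω, Z ω)))
      = -∑ s, ∑ t, ∑ u, a s t u * Real.log (a s t u) := by
    unfold entropy
    rw [Fintype.sum_prod_type]
    congr 1
    exact Finset.sum_congr rfl fun s _ => Fintype.sum_prod_type _
  have eB : entropy p (fun ω => (X ω, Z ω)) = -∑ s, ∑ t, ∑ u, a s t u * Real.log (b s u) := by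
    unfold entropy
    rw [Fintype.sum_prod_type]
    congr 1
    refine Finset.sum_congr rfl fun s _ => ?_
    rw [Finset.sum_comm]
    refine Finset.sum_congr rfl fun u _ => ?_
    rw [show prob p (fun ω => (X ω, Z ω)) (s, u) = b s u from rfl, hba, Finset.sum_mul]
  have eC : entropy p (fun ω => (Y ω, Z ω)) = -∑ s, ∑ t, ∑ u, a s t u * Real.log (c t u) := by
    unfold entropy
    congr 1
    calc ∑ tu : T' × U, prob p (fun ω => (Y ω, Z ω)) tu
          * Real.log (prob p (fun ω => (Y ω, Z ω)) tu)
        = ∑ t, ∑ u, c t u * Real.log (c t u) := Fintype.sum_prod_type _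
      _ = ∑ t, ∑ u, ∑ s, a s t u * Real.log (c t u) := by
          refine Finset.sum_congr rfl fun t _ => ?_
          refine Finset.sum_congr rfl fun u _ => ?_
          rw [hca, Finset.sum_mul]
      _ = ∑ t, ∑ s, ∑ u, a s t u * Real.log (c t u) :=
          Finset.sum_congr rfl fun t _ => Finset.sum_comm
      _ = ∑ s, ∑ t, ∑ u, a s t u * Real.log (c t u) := Finset.sum_comm
  have eD : entropy p Z = -∑ s, ∑ t, ∑ u, a s t u * Real.log (d u) := by
    unfold entropy
    congr 1
    have h1 : ∀ u, prob p Z u * Real.log (prob p Z u)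
        = ∑ s, ∑ t, a s t u * Real.log (d u) := by
      intro u
      have hz : prob p Z u = d u := rfl
      rw [hz, show (∑ s, ∑ t, a s t u * Real.log (d u)) = (∑ s, b s u) * Real.log (d u) from by
        rw [Finset.sum_mul]
        exact Finset.sum_congr rfl fun s _ => by rw [hba, Finset.sum_mul], ← hdb]
    calc ∑ u, prob p Z u * Real.log (prob p Z u)
        = ∑ u, ∑ s, ∑ t, a s t u * Real.log (d u) := Finset.sum_congr rfl fun u _ => h1 u
      _ = ∑ s, ∑ u, ∑ t, a s t u * Real.log (d u) := Finset.sum_comm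
      _ = ∑ s, ∑ t, ∑ u, a s t u * Real.log (d u) :=
          Finset.sum_congr rfl fun s _ => Finset.sum_comm
  have main : ∑ s, ∑ t, ∑ u, a s t u * (Real.log (b s u) + Real.log (c t u)
      - Real.log (a s t u) - Real.log (d u)) ≤ 0 := by
    calc ∑ s, ∑ t, ∑ u, a s t u * (Real.log (b s u) + Real.log (c t u)
          - Real.log (a s t u) - Real.log (d u))
        ≤ ∑ s, ∑ t, ∑ u, (b s u * c t u / d u - a s t u) := by
          refine Finset.sum_le_sum fun s _ => Finset.sum_le_sum fun t _ =>
            Finset.sum_le_sum fun u _ => ?_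
          exact gibbs_term (ha0 s t u) (hab s t u) (hac s t u) (had s t u)
      _ = ∑ s, ∑ u, ∑ t, (b s u * c t u / d u - a s t u) :=
          Finset.sum_congr rfl fun s _ => Finset.sum_comm
      _ = ∑ u, ∑ s, ∑ t, (b s u * c t u / d u - a s t u) := Finset.sum_comm
      _ = 0 := by
          refine Finset.sum_eq_zero fun u _ => ?_
          have hsa : ∑ s, ∑ t, a s t u = d u := by
            rw [hdb]
            exact Finset.sum_congr rfl fun s _ => (hba s u).symm
          rcases eq_or_ne (d u) 0 with h0 | h0
          · have hbz : ∀ s, b s u = 0 := by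
              intro s
              have hsz : ∑ s', b s' u = 0 := (hdb u).symm.trans h0
              exact (Finset.sum_eq_zero_iff_of_nonneg
                (fun s' _ => hb0 s' u)).1 hsz s (Finset.mem_univ s)
            refine Finset.sum_eq_zero fun s _ => Finset.sum_eq_zero fun t _ => ?_
            have haz : a s t u = 0 := le_antisymm (hbz s ▸ hab s t u) (ha0 s t u)
            rw [hbz s, haz]
            simp
          · have h2 : ∀ s, ∑ t, (b s u * c t u / d u - a s t u)
                = b s u * d u / d u - b s u := by
              intro s
              rw [Finset.sum_sub_distrib, ← Finset.sum_div, ← Finset.mul_sum, ← hdc, ← hba]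
            rw [Finset.sum_congr rfl fun s _ => h2 s, Finset.sum_sub_distrib]
            rw [← Finset.sum_div, ← Finset.sum_mul, ← hdb]
            field_simp
            ring
  have expand : ∑ s, ∑ t, ∑ u, a s t u * (Real.log (b s u) + Real.log (c t u)
        - Real.log (a s t u) - Real.log (d u))
      = (∑ s, ∑ t, ∑ u, a s t u * Real.log (b s u))
        + (∑ s, ∑ t, ∑ u, a s t u * Real.log (c t u))
        - (∑ s, ∑ t, ∑ u, a s t u * Real.log (a s t u))
        - (∑ s, ∑ t, ∑ u, a s t u * Real.log (d u)) := by
    simp only [mul_add, mul_sub, Finset.sum_add_distrib, Finset.sum_sub_distrib]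
  simp only [condMutualInfo, condEntropy]
  rw [eA, eB, eC, eD]
  linarith [expand ▸ main]

lemma entropy_past_succ (p : Ω → ℝ) {S : Type*} [Fintype S] [DecidableEq S]
    (X : ℕ → Ω → S) (t : ℕ) :
    entropy p (past X (t+1)) = entropy p (fun ω => (X t ω, past X t ω)) := by
  have hf : Function.Injective (fun g : Fin (t+1) → S =>
      (g (Fin.last t), fun k : Fin t => g k.castSucc)) := by
    intro g g' h
    simp only [Prod.mk.injEq] at h
    funext k
    induction k using Fin.lastCases with
    | last => exact h.1
    | cast k => exact congrFun h.2 k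
  rw [← entropy_comp p hf (past X (t+1))]
  congr 1

lemma entropy_past_succ_pair (p : Ω → ℝ) {S T' : Type*} [Fintype S] [DecidableEq S]
    [Fintype T'] [DecidableEq T'] (X : ℕ → Ω → S) (Y : ℕ → Ω → T') (t : ℕ) :
    entropy p (fun ω => (past X (t+1) ω, past Y (t+1) ω))
      = entropy p (fun ω => (X t ω, (Y t ω, (past X t ω, past Y t ω)))) := by
  have hf : Function.Injective (fun g : (Fin (t+1) → S) × (Fin (t+1) → T') =>
      (g.1 (Fin.last t), (g.2 (Fin.last t),
        (fun k : Fin t => g.1 k.castSucc, fun k : Fin t => g.2 k.castSucc)))) := by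
    rintro ⟨g1, g2⟩ ⟨h1, h2⟩ heq
    simp only [Prod.mk.injEq] at heq
    obtain ⟨e1, e2, e3, e4⟩ := heq
    have hg1 : g1 = h1 := by
      funext k
      induction k using Fin.lastCases with
      | last => exact e1
      | cast k => exact congrFun e3 k
    have hg2 : g2 = h2 := by
      funext k
      induction k using Fin.lastCases with
      | last => exact e2
      | cast k => exact congrFun e4 k
    simp [hg1, hg2]
  rw [← entropy_comp p hf (fun ω => (past X (t+1) ω, past Y (t+1) ω))]
  congr 1

lemma entropy_swap_pair (p : Ω → ℝ) {A B : Type*} [Fintype A] [DecidableEq A] [Fintype B]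
    [DecidableEq B] (F : Ω → A) (G : Ω → B) :
    entropy p (fun ω => (F ω, G ω)) = entropy p (fun ω => (G ω, F ω)) := by
  have hf : Function.Injective (fun x : B × A => (x.2, x.1)) := by
    rintro ⟨b, a⟩ ⟨b', a'⟩ h
    simpa [Prod.ext_iff, and_comm] using h
  exact (entropy_comp p hf (fun ω => (G ω, F ω))).symm.symm

lemma entropy_swap_inner (p : Ω → ℝ) {A B C : Type*} [Fintype A] [DecidableEq A] [Fintype B]
    [DecidableEq B] [Fintype C] [DecidableEq C] (F : Ω → A) (G : Ω → B) (Hc : Ω → C) :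
    entropy p (fun ω => (F ω, (G ω, Hc ω))) = entropy p (fun ω => (F ω, (Hc ω, G ω))) := by
  have hf : Function.Injective (fun z : A × (C × B) => (z.1, (z.2.2, z.2.1))) := by
    rintro ⟨a, c, b⟩ ⟨a', c', b'⟩ h
    simp_all [Prod.ext_iff]
  exact entropy_comp p hf (fun ω => (F ω, (Hc ω, G ω)))

lemma step_identity (p : Ω → ℝ) {S T' : Type*} [Fintype S] [DecidableEq S] [Fintype T']
    [DecidableEq T'] (X : ℕ → Ω → S) (Y : ℕ → Ω → T') (t : ℕ) :
    mutualInfo p (past X (t+1)) (past Y (t+1))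
      = mutualInfo p (past X t) (past Y t)
        + condMutualInfo p (X t) (past Y t) (past X t)
        + condMutualInfo p (Y t) (past X t) (past Y t)
        + condMutualInfo p (X t) (Y t) (fun ω => (past X t ω, past Y t ω)) := by
  have e1 := entropy_past_succ p X t
  have e2 := entropy_past_succ p Y t
  have e3 := entropy_past_succ_pair p X Y t
  have e4 : entropy p (fun ω => (X t ω, (past Y t ω, past X t ω)))
      = entropy p (fun ω => (X t ω, (past X t ω, past Y t ω))) :=
    entropy_swap_inner p (X t) (past Y t) (past X t)
  have e5 : entropy p (fun ω => (past Y t ω, past X t ω))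
      = entropy p (fun ω => (past X t ω, past Y t ω)) :=
    entropy_swap_pair p (past Y t) (past X t)
  simp only [mutualInfo, condMutualInfo, condEntropy]
  rw [e1, e2, e3, e4, e5]
  ring

lemma mutualInfo_past_zero (p : Ω → ℝ) (hp1 : ∑ ω, p ω = 1) {S T' : Type*} [Fintype S]
    [DecidableEq S] [Fintype T'] [DecidableEq T'] (X : ℕ → Ω → S) (Y : ℕ → Ω → T') :
    mutualInfo p (past X 0) (past Y 0) = 0 := by
  have h1 : entropy p (past X 0) = 0 := entropy_unique p hp1 _
  have h2 : entropy p (past Y 0) = 0 := entropy_unique p hp1 _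
  haveI : Unique ((Fin 0 → S) × (Fin 0 → T')) :=
    ⟨⟨(default, default)⟩, fun a => Prod.ext (Unique.eq_default a.1) (Unique.eq_default a.2)⟩
  have h3 : entropy p (fun ω => (past X 0 ω, past Y 0 ω)) = 0 := entropy_unique p hp1 _
  simp [mutualInfo, condEntropy, h1, h2, h3]

lemma entropyRate_eq (p : Ω → ℝ) (hp1 : ∑ ω, p ω = 1) {S : Type*} [Fintype S]
    [DecidableEq S] (X : ℕ → Ω → S) (T : ℕ) :
    entropyRate p X T = entropy p (past X T) := by
  induction T with
  | zero => simp [entropyRate, entropy_unique p hp1 (past X 0)]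
  | succ n ih =>
      rw [entropyRate, Finset.sum_range_succ, ← entropyRate, ih, entropy_past_succ p X n]
      simp only [condEntropy]
      ring

lemma telescope (p : Ω → ℝ) (hp1 : ∑ ω, p ω = 1) {S T' : Type*} [Fintype S] [DecidableEq S]
    [Fintype T'] [DecidableEq T'] (X : ℕ → Ω → S) (Y : ℕ → Ω → T') (T : ℕ) :
    pte p X Y T + pte p Y X T + residualEntropy p X Y T
      = mutualInfo p (past X T) (past Y T) := by
  induction T with
  | zero => simp [pte, residualEntropy, mutualInfo_past_zero p hp1 X Y]
  | succ n ih =>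
      simp only [pte, residualEntropy, Finset.sum_range_succ] at *
      rw [step_identity p X Y n]
      linarith

lemma mutualInfo_le_left (p : Ω → ℝ) (hp0 : ∀ ω, 0 ≤ p ω) {A' B' : Type*} [Fintype A']
    [DecidableEq A'] [Fintype B'] [DecidableEq B'] (A : Ω → A') (B : Ω → B') :
    mutualInfo p A B ≤ entropy p A := by
  have h := condEntropy_nonneg p hp0 A B
  simp only [mutualInfo]
  linarith

lemma mutualInfo_le_right (p : Ω → ℝ) (hp0 : ∀ ω, 0 ≤ p ω) {A' B' : Type*} [Fintype A']
    [DecidableEq A'] [Fintype B'] [DecidableEq B'] (A : Ω → A') (B : Ω → B') :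
    mutualInfo p A B ≤ entropy p B := by
  have h1 := condEntropy_nonneg p hp0 B A
  have h2 := entropy_swap_pair p A B
  simp only [mutualInfo, condEntropy] at *
  linarith

/-- Marko's inequality: `min(H_X^T, H_Y^T) ≥ T_{X→Y}^T + T_{Y→X}^T`. -/
theorem marko_inequality (p : Ω → ℝ) (hp : IsProb p)
    {S T' : Type*} [Fintype S] [DecidableEq S] [Fintype T'] [DecidableEq T']
    (X : ℕ → Ω → S) (Y : ℕ → Ω → T') (T : ℕ) :
    pte p X Y T + pte p Y X T ≤ min (entropyRate p X T) (entropyRate p Y T) := by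
  obtain ⟨hp0, hp1⟩ := hp
  have tel := telescope p hp1 X Y T
  have hres : 0 ≤ residualEntropy p X Y T := by
    simp only [residualEntropy]
    exact Finset.sum_nonneg fun t _ => condMutualInfo_nonneg p hp0 _ _ _
  have h1 := mutualInfo_le_left p hp0 (past X T) (past Y T)
  have h2 := mutualInfo_le_right p hp0 (past X T) (past Y T)
  rw [← entropyRate_eq p hp1 X T] at h1
  rw [← entropyRate_eq p hp1 Y T] at h2
  exact le_min (by linarith) (by linarith)

end
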